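/- Let f be a piecewise linear orientation-preserving circle homeomorphism conjugate to a rigid rational rotation of rotation number p/q. If break points b_{j_1}, …, b_{j_r} are exactly the break points lying on a single periodic orbit of f, then the product of the jump ratios over these break points equals 1: ∏_{i=1}^r F'(b_{j_i,+}) / F'(b_{j_i,−}) = 1. -/

import Mathlib

open MeasureTheory Filter Set

/-- A lift of an orientation-preserving circle homeomorphism. -/
def IsLift (F : ℝ → ℝ) : Prop :=
  Continuous F ∧ StrictMono F ∧ ∀ x, F (x + 1) = F x + 1

/-- `b` is a break point of `F`: one-sided derivatives exist and differ. -/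
def IsBreakPoint (F : ℝ → ℝ) (b : ℝ) : Prop :=
  ∃ dm dp : ℝ, dm ≠ dp ∧ HasDerivWithinAt F dm (Set.Iic b) b ∧
    HasDerivWithinAt F dp (Set.Ici b) b

/-- `F` is a piecewise linear lift with break point set `B ⊆ [0,1)`:
it is a lift, each point of `B` is a break point, and `F` is affine near any
point not congruent (mod 1) to a break point. -/
def IsPWLLift (F : ℝ → ℝ) (B : Finset ℝ) : Prop :=
  IsLift F ∧ (↑B : Set ℝ) ⊆ Set.Ico (0 : ℝ) 1 ∧
  (∀ b ∈ B, IsBreakPoint F b) ∧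
  (∀ x : ℝ, (∀ b ∈ B, ∀ k : ℤ, x ≠ b + k) →
    ∃ ε > 0, ∃ a c : ℝ, ∀ y, |y - x| < ε → F y = a * y + c)

/-- The rotation number of the lift `F` is `ρ`. -/
def HasRotNum (F : ℝ → ℝ) (ρ : ℝ) : Prop :=
  ∀ x : ℝ, Filter.Tendsto (fun m : ℕ => (F^[m] x - x) / m) Filter.atTop (nhds ρ)

/-- `b` and `b'` lie on the same orbit of the circle map induced by the lift `F`. -/
def SameOrbit (F : ℝ → ℝ) (b b' : ℝ) : Prop :=
  ∃ j : ℕ, ∃ m : ℤ, F^[j] b = b' + m ∨ F^[j] b' = b + m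

section Aux
variable {F : ℝ → ℝ}

lemma lift_int (h1 : ∀ x, F (x + 1) = F x + 1) (m : ℤ) (x : ℝ) :
    F (x + m) = F x + m := by
  induction m using Int.induction_on with
  | zero => simp
  | succ n ih =>
      have h2 : x + ((n:ℤ) + 1 : ℤ) = (x + (n:ℤ)) + 1 := by push_cast; ring
      rw [h2, h1, ih]; push_cast; ring
  | pred n ih =>
      have h2 : x + (-(n:ℤ) - 1 : ℤ) + 1 = x + (-(n:ℤ) : ℤ) := by push_cast; ring
      have := h1 (x + (-(n:ℤ) - 1 : ℤ))
      rw [h2, ih] at this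
      push_cast at this ⊢; linarith

lemma iterate_int (h1 : ∀ x, F (x + 1) = F x + 1) (k : ℕ) (m : ℤ) (x : ℝ) :
    F^[k] (x + m) = F^[k] x + m := by
  induction k with
  | zero => simp
  | succ n ih => rw [Function.iterate_succ_apply', Function.iterate_succ_apply', ih, lift_int h1]

lemma deriv_translate_Ici (h1 : ∀ x, F (x + 1) = F x + 1) {d x : ℝ} (m : ℤ)
    (h : HasDerivWithinAt F d (Ici x) x) :
    HasDerivWithinAt F d (Ici (x + m)) (x + m) := by
  have hsub : HasDerivWithinAt (fun y : ℝ => y - (m:ℝ)) 1 (Ici (x + m)) (x + m) :=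
    (hasDerivWithinAt_id _ _).sub_const _
  have hmaps : Set.MapsTo (fun y : ℝ => y - (m:ℝ)) (Ici (x + m)) (Ici x) := fun y hy => by
    simp only [mem_Ici] at *; linarith
  have h' : HasDerivWithinAt F d (Ici x) (x + (m:ℝ) - (m:ℝ)) := by
    simpa using h
  have hcomp := HasDerivWithinAt.comp (x + (m:ℝ)) h' hsub hmaps
  have hadd := hcomp.add_const (m:ℝ)
  have heq : ∀ y : ℝ, (F ∘ fun y : ℝ => y - (m:ℝ)) y + (m:ℝ) = F y := by
    intro y
    have h3 := lift_int h1 m (y - m)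
    have h2 : y - (m:ℝ) + m = y := by ring
    rw [h2] at h3
    simp only [Function.comp_apply]
    exact h3.symm
  have : HasDerivWithinAt F (d * 1) (Ici (x + m)) (x + m) :=
    hadd.congr (fun y _ => (heq y).symm) (heq _).symm |>.congr (fun y _ => rfl) rfl
  simpa using this

lemma deriv_translate_Iic (h1 : ∀ x, F (x + 1) = F x + 1) {d x : ℝ} (m : ℤ)
    (h : HasDerivWithinAt F d (Iic x) x) :
    HasDerivWithinAt F d (Iic (x + m)) (x + m) := by
  have hsub : HasDerivWithinAt (fun y : ℝ => y - (m:ℝ)) 1 (Iic (x + m)) (x + m) :=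
    (hasDerivWithinAt_id _ _).sub_const _
  have hmaps : Set.MapsTo (fun y : ℝ => y - (m:ℝ)) (Iic (x + m)) (Iic x) := fun y hy => by
    simp only [mem_Iic] at *; linarith
  have h' : HasDerivWithinAt F d (Iic x) (x + (m:ℝ) - (m:ℝ)) := by
    simpa using h
  have hcomp := HasDerivWithinAt.comp (x + (m:ℝ)) h' hsub hmaps
  have hadd := hcomp.add_const (m:ℝ)
  have heq : ∀ y : ℝ, (F ∘ fun y : ℝ => y - (m:ℝ)) y + (m:ℝ) = F y := by
    intro y
    have h3 := lift_int h1 m (y - m)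
    have h2 : y - (m:ℝ) + m = y := by ring
    rw [h2] at h3
    simp only [Function.comp_apply]
    exact h3.symm
  have : HasDerivWithinAt F (d * 1) (Iic (x + m)) (x + m) :=
    hadd.congr (fun y _ => (heq y).symm) (heq _).symm
  simpa using this

lemma unique_Ici {d d' x : ℝ} (h : HasDerivWithinAt F d (Ici x) x)
    (h' : HasDerivWithinAt F d' (Ici x) x) : d = d' := by
  have u := uniqueDiffOn_Ici x x self_mem_Ici
  rw [← h.derivWithin u, ← h'.derivWithin u]

lemma unique_Iic {d d' x : ℝ} (h : HasDerivWithinAt F d (Iic x) x)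
    (h' : HasDerivWithinAt F d' (Iic x) x) : d = d' := by
  have u := uniqueDiffOn_Iic x x self_mem_Iic
  rw [← h.derivWithin u, ← h'.derivWithin u]

lemma nonneg_Ici (hmono : StrictMono F) {d x : ℝ}
    (h : HasDerivWithinAt F d (Ici x) x) : 0 ≤ d := by
  rw [hasDerivWithinAt_iff_tendsto_slope] at h
  have hset : (Ici x) \ {x} = Ioi x := by
    ext y; simp [mem_Ici, mem_Ioi, lt_iff_le_and_ne, and_comm, eq_comm]
  rw [hset] at h
  have ev : ∀ᶠ y in nhdsWithin x (Ioi x), 0 ≤ slope F x y := by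
    filter_upwards [eventually_mem_nhdsWithin] with y hy
    have hy' : x < y := hy
    have : F x < F y := hmono hy'
    rw [slope_def_field]
    exact div_nonneg (by linarith) (by linarith)
  exact ge_of_tendsto h ev

lemma nonneg_Iic (hmono : StrictMono F) {d x : ℝ}
    (h : HasDerivWithinAt F d (Iic x) x) : 0 ≤ d := by
  rw [hasDerivWithinAt_iff_tendsto_slope] at h
  have hset : (Iic x) \ {x} = Iio x := by
    ext y; simp [mem_Iic, mem_Iio, lt_iff_le_and_ne]
  rw [hset] at h
  have ev : ∀ᶠ y in nhdsWithin x (Iio x), 0 ≤ slope F x y := by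
    filter_upwards [eventually_mem_nhdsWithin] with y hy
    have hy' : y < x := hy
    have : F y < F x := hmono hy'
    rw [slope_def_field, ← neg_div_neg_eq, neg_sub, neg_sub]
    exact div_nonneg (by linarith) (by linarith)
  exact ge_of_tendsto h ev

lemma iterate_mul_q {q : ℕ} {p : ℤ} (hper : ∀ x, F^[q] x = x + p)
    (h1 : ∀ x, F (x + 1) = F x + 1) (n : ℕ) (x : ℝ) :
    F^[q * n] x = x + (n : ℤ) * p := by
  induction n with
  | zero => simp
  | succ n ih =>
      rw [Nat.mul_succ, Function.iterate_add_apply, hper, iterate_int h1, ih]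
      push_cast; ring

lemma iterate_mod (q : ℕ) (p : ℤ) (hper : ∀ x, F^[q] x = x + p)
    (h1 : ∀ x, F (x + 1) = F x + 1) (k : ℕ) (x : ℝ) :
    F^[k] x = F^[k % q] x + ((k / q : ℕ) : ℤ) * p := by
  conv_lhs => rw [← Nat.div_add_mod k q]
  rw [Function.iterate_add_apply, iterate_mul_q hper h1]

lemma mod_inv1 {q k : ℕ} (hq : 0 < q) (hk : k < q) :
    ((k + 1) % q + (q - 1)) % q = k := by
  rcases Nat.lt_or_ge (k + 1) q with h | h
  · rw [Nat.mod_eq_of_lt h]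
    have h2 : k + 1 + (q - 1) = k + q := by omega
    rw [h2, Nat.add_mod_right, Nat.mod_eq_of_lt hk]
  · have h2 : k + 1 = q := by omega
    rw [h2, Nat.mod_self, Nat.zero_add]
    have e3 : q - 1 < q := by omega
    rw [Nat.mod_eq_of_lt e3]
    omega

lemma mod_inv2 {q k : ℕ} (hq : 0 < q) (hk : k < q) :
    ((k + (q - 1)) % q + 1) % q = k := by
  rcases Nat.eq_zero_or_pos k with h | h
  · subst h
    have e1 : q - 1 < q := by omega
    rw [Nat.zero_add, Nat.mod_eq_of_lt e1]
    have e2 : q - 1 + 1 = q := by omega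
    rw [e2, Nat.mod_self]
  · have h2 : k + (q - 1) = (k - 1) + q := by omega
    have e1 : k - 1 < q := by omega
    rw [h2, Nat.add_mod_right, Nat.mod_eq_of_lt e1]
    have h3 : k - 1 + 1 = k := by omega
    rw [h3, Nat.mod_eq_of_lt hk]

end Aux
section M
variable {F : ℝ → ℝ}

lemma affine_hasderiv {x ε a c : ℝ} (hε : 0 < ε)
    (hac : ∀ y, |y - x| < ε → F y = a * y + c) (s : Set ℝ) :
    HasDerivWithinAt F a s x := by
  have hlin : HasDerivWithinAt (fun y : ℝ => a * y + c) a s x := by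
    simpa using ((hasDerivWithinAt_id x s).const_mul a).add_const c
  refine hlin.congr_of_eventuallyEq ?_ (hac x (by simpa using hε))
  have hball : Metric.ball x ε ∈ nhdsWithin x s :=
    mem_nhdsWithin_of_mem_nhds (Metric.ball_mem_nhds x hε)
  filter_upwards [hball] with y hy
  exact hac y (by simpa [Real.dist_eq] using hy)

end M

/-- for a PWL circle homeomorphism conjugate to a rigid rational rotation
(`F^q(x) = x + p`), the product of the jump ratios over the break points lying on any
single periodic orbit equals one. -/
theorem stmt3 (F : ℝ → ℝ) (B : Finset ℝ) (p : ℤ) (q : ℕ) (hq : 0 < q)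
    (hF : IsPWLLift F B) (hper : ∀ x, F^[q] x = x + p)
    (r : ℕ) (hr : 0 < r) (j : Fin r → ℝ) (hinj : Function.Injective j)
    (hjB : ∀ i, j i ∈ B)
    (horb : ∀ i i', SameOrbit F (j i) (j i'))
    (hexact : ∀ b ∈ B, (∃ i, SameOrbit F b (j i)) → ∃ i, b = j i)
    (dm dp : Fin r → ℝ)
    (hdm : ∀ i, HasDerivWithinAt F (dm i) (Set.Iic (j i)) (j i))
    (hdp : ∀ i, HasDerivWithinAt F (dp i) (Set.Ici (j i)) (j i))
    (hdm0 : ∀ i, dm i ≠ 0) :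
    ∏ i, dp i / dm i = 1 := by
  classical
  obtain ⟨⟨hcont, hmono, h1⟩, hB01, hbreak, haff⟩ := hF
  set i0 : Fin r := ⟨0, hr⟩ with hi0
  set b : ℝ := j i0 with hbdef
  -- one-sided derivatives exist everywhere
  have hex : ∀ x : ℝ, ∃ dmx dpx : ℝ,
      HasDerivWithinAt F dmx (Iic x) x ∧ HasDerivWithinAt F dpx (Ici x) x := by
    intro x
    by_cases hc : ∀ b' ∈ B, ∀ k : ℤ, x ≠ b' + k
    · obtain ⟨ε, hε, a, c, hac⟩ := haff x hc
      exact ⟨a, a, affine_hasderiv hε hac _, affine_hasderiv hε hac _⟩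
    · push_neg at hc
      obtain ⟨b', hb', k, hk⟩ := hc
      obtain ⟨dmb, dpb, _, hmb, hpb⟩ := hbreak b' hb'
      exact ⟨dmb, dpb, by rw [hk]; exact deriv_translate_Iic h1 k hmb,
        by rw [hk]; exact deriv_translate_Ici h1 k hpb⟩
  choose Dm Dp hDm hDp using hex
  -- chain rule along the orbit
  have hchainP : ∀ k : ℕ, HasDerivWithinAt (F^[k])
      (∏ t ∈ Finset.range k, Dp (F^[t] b)) (Ici b) b := by
    intro k
    induction k with
    | zero => simpa using hasDerivWithinAt_id b (Ici b)
    | succ n ih =>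
        rw [Function.iterate_succ', Finset.prod_range_succ, mul_comm]
        have hmaps : Set.MapsTo (F^[n]) (Ici b) (Ici (F^[n] b)) :=
          fun y hy => (hmono.iterate n).monotone hy
        exact HasDerivWithinAt.comp b (hDp (F^[n] b)) ih hmaps
  have hchainM : ∀ k : ℕ, HasDerivWithinAt (F^[k])
      (∏ t ∈ Finset.range k, Dm (F^[t] b)) (Iic b) b := by
    intro k
    induction k with
    | zero => simpa using hasDerivWithinAt_id b (Iic b)
    | succ n ih =>
        rw [Function.iterate_succ', Finset.prod_range_succ, mul_comm]
        have hmaps : Set.MapsTo (F^[n]) (Iic b) (Iic (F^[n] b)) :=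
          fun y hy => (hmono.iterate n).monotone hy
        exact HasDerivWithinAt.comp b (hDm (F^[n] b)) ih hmaps
  have hfq : F^[q] = fun x => x + (p : ℝ) := funext hper
  have prodP : ∏ t ∈ Finset.range q, Dp (F^[t] b) = 1 := by
    refine unique_Ici (hchainP q) ?_
    rw [hfq]
    exact (hasDerivWithinAt_id b (Ici b)).add_const _
  have prodM : ∏ t ∈ Finset.range q, Dm (F^[t] b) = 1 := by
    refine unique_Iic (hchainM q) ?_
    rw [hfq]
    exact (hasDerivWithinAt_id b (Iic b)).add_const _
  have posP : ∀ t, 0 < Dp (F^[t] b) := by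
    intro t
    have h0 : ∀ s, Dp (F^[s] b) ≠ 0 := by
      intro s hs0
      have hs' : s % q ∈ Finset.range q := Finset.mem_range.mpr (Nat.mod_lt _ hq)
      have : Dp (F^[s % q] b) = 0 := by
        have hmod := iterate_mod q p hper h1 s b
        have := deriv_translate_Ici h1 (-(((s / q : ℕ) : ℤ) * p))
          (x := F^[s] b) (d := Dp (F^[s] b)) (hDp _)
        rw [hs0] at this
        have hxe : F^[s] b + (-(((s / q : ℕ) : ℤ) * p) : ℤ) = F^[s % q] b := by
          rw [hmod]; push_cast; ring
        rw [hxe] at this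
        exact unique_Ici (hDp _) this
      exact one_ne_zero (α := ℝ) (by rw [← prodP]; exact Finset.prod_eq_zero hs' ‹Dp (F^[s % q] b) = 0›)
    exact lt_of_le_of_ne (nonneg_Ici hmono (hDp _)) (Ne.symm (h0 t))
  have posM : ∀ t, 0 < Dm (F^[t] b) := by
    intro t
    have h0 : ∀ s, Dm (F^[s] b) ≠ 0 := by
      intro s hs0
      have hs' : s % q ∈ Finset.range q := Finset.mem_range.mpr (Nat.mod_lt _ hq)
      have hz : Dm (F^[s % q] b) = 0 := by
        have hmod := iterate_mod q p hper h1 s b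
        have := deriv_translate_Iic h1 (-(((s / q : ℕ) : ℤ) * p))
          (x := F^[s] b) (d := Dm (F^[s] b)) (hDm _)
        rw [hs0] at this
        have hxe : F^[s] b + (-(((s / q : ℕ) : ℤ) * p) : ℤ) = F^[s % q] b := by
          rw [hmod]; push_cast; ring
        rw [hxe] at this
        exact unique_Iic (hDm _) this
      exact one_ne_zero (α := ℝ) (by rw [← prodM]; exact Finset.prod_eq_zero hs' hz)
    exact lt_of_le_of_ne (nonneg_Iic hmono (hDm _)) (Ne.symm (h0 t))
  -- reduce any orbit relation to an iterate of b with exponent < q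
  have reduce : ∀ (y : ℝ) (s : ℕ) (m' : ℤ), F^[s] b = y + m' →
      ∃ k, k < q ∧ ∃ m'' : ℤ, F^[k] b = y + m'' := by
    intro y s m' hs
    refine ⟨s % q, Nat.mod_lt _ hq, m' - ((s / q : ℕ) : ℤ) * p, ?_⟩
    have hmod := iterate_mod q p hper h1 s b
    rw [hmod] at hs
    push_cast at hs ⊢
    linarith
  have hto_b : ∀ y : ℝ, SameOrbit F y b → ∃ k, k < q ∧ ∃ m : ℤ, F^[k] b = y + m := by
    rintro y ⟨n, m, hc | hc⟩
    · -- F^[n] y = b + m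
      have hnq : n ≤ q * n := Nat.le_mul_of_pos_left n hq
      have hsn : (q * n - n) + n = q * n := by omega
      have h2 : F^[q * n - n] (F^[n] y) = F^[q * n] y := by
        rw [← Function.iterate_add_apply, hsn]
      rw [hc, iterate_mul_q hper h1] at h2
      rw [iterate_int h1] at h2
      exact reduce y (q * n - n) ((n : ℤ) * p - m) (by push_cast at h2 ⊢; linarith)
    · exact reduce y n m hc
  have hfind : ∀ i, ∃ k, k < q ∧ ∃ m : ℤ, F^[k] b = j i + m :=
    fun i => hto_b (j i) (horb i i0)
  -- counting function
  set cnt : ℝ → ℕ := fun y =>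
    ((Finset.range q).filter (fun k => ∃ m : ℤ, F^[k] b = y + m)).card with hcnt_def
  have hshift : ∀ a k : ℕ, k < q →
      ((∃ m : ℤ, F^[k] b = F^[a] b + m) ↔ (∃ m : ℤ, F^[(k+1) % q] b = F^[a+1] b + m)) := by
    intro a k hk
    have h3 := iterate_mod q p hper h1 (k + 1) b
    constructor
    · rintro ⟨m, hm⟩
      have h2 : F^[k+1] b = F^[a+1] b + m := by
        rw [Function.iterate_succ_apply', Function.iterate_succ_apply', hm, lift_int h1]
      refine ⟨m - (((k+1) / q : ℕ) : ℤ) * p, ?_⟩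
      rw [h3] at h2
      push_cast at h2 ⊢
      linarith
    · rintro ⟨m, hm⟩
      have h2 : F^[k+1] b = F^[a+1] b + ((m + (((k+1) / q : ℕ) : ℤ) * p : ℤ) : ℝ) := by
        rw [h3, hm]; push_cast; ring
      rw [Function.iterate_succ_apply', Function.iterate_succ_apply'] at h2
      have h4 : F (F^[k] b) = F (F^[a] b + ((m + (((k+1) / q : ℕ) : ℤ) * p : ℤ) : ℝ)) := by
        rw [lift_int h1]; exact h2
      exact ⟨_, hmono.injective h4⟩
  have hcnt_shift : ∀ a : ℕ, cnt (F^[a] b) = cnt (F^[a+1] b) := by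
    intro a
    rw [hcnt_def]
    refine Finset.card_nbij' (fun k => (k + 1) % q) (fun k => (k + (q - 1)) % q)
      ?_ ?_ ?_ ?_
    · intro k hk
      obtain ⟨hkr, m, hm⟩ := Finset.mem_filter.mp hk
      have hklt := Finset.mem_range.mp hkr
      exact Finset.mem_filter.mpr ⟨Finset.mem_range.mpr (Nat.mod_lt _ hq),
        (hshift a k hklt).mp ⟨m, hm⟩⟩
    · intro k hk
      obtain ⟨hkr, m, hm⟩ := Finset.mem_filter.mp hk
      have hklt := Finset.mem_range.mp hkr
      have hk'lt : (k + (q - 1)) % q < q := Nat.mod_lt _ hq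
      refine Finset.mem_filter.mpr ⟨Finset.mem_range.mpr hk'lt, ?_⟩
      have := (hshift a ((k + (q - 1)) % q) hk'lt)
      rw [mod_inv2 hq hklt] at this
      exact this.mpr ⟨m, hm⟩
    · intro k hk
      obtain ⟨hkr, -⟩ := Finset.mem_filter.mp hk
      exact mod_inv1 hq (Finset.mem_range.mp hkr)
    · intro k hk
      obtain ⟨hkr, -⟩ := Finset.mem_filter.mp hk
      exact mod_inv2 hq (Finset.mem_range.mp hkr)
  have hcnt_iter : ∀ a : ℕ, cnt (F^[a] b) = cnt b := by
    intro a
    induction a with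
    | zero => simp
    | succ n ih => rw [← hcnt_shift n, ih]
  have hcnt_res : ∀ (y : ℝ) (m : ℤ), cnt (y + m) = cnt y := by
    intro y m
    have hiff : ∀ k ∈ Finset.range q,
        (∃ m' : ℤ, F^[k] b = (y + m) + m') ↔ (∃ m' : ℤ, F^[k] b = y + m') := by
      intro k _
      constructor
      · rintro ⟨m', hm'⟩; exact ⟨m + m', by push_cast at hm' ⊢; linarith⟩
      · rintro ⟨m', hm'⟩; exact ⟨m' - m, by push_cast at hm' ⊢; linarith⟩
    simp only [hcnt_def]
    exact congrArg Finset.card (Finset.filter_congr hiff)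
  set T : Fin r → Finset ℕ := fun i =>
    (Finset.range q).filter (fun k => ∃ m : ℤ, F^[k] b = j i + m) with hT_def
  have hTcnt : ∀ i, (T i).card = cnt (j i) := fun i => rfl
  have hTcard : ∀ i, (T i).card = cnt b := by
    intro i
    obtain ⟨k, hk, m, hm⟩ := hfind i
    rw [hTcnt i, ← hcnt_iter k, hm, hcnt_res]
  have hC1 : 1 ≤ cnt b := by
    refine Finset.card_pos.mpr ⟨0, Finset.mem_filter.mpr ⟨Finset.mem_range.mpr hq, 0, by simp⟩⟩
  -- value of the jump on T i
  have hgT : ∀ i, ∀ k ∈ T i, Dp (F^[k] b) / Dm (F^[k] b) = dp i / dm i := by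
    intro i k hk
    obtain ⟨-, m, hm⟩ := Finset.mem_filter.mp hk
    have e1 : Dp (F^[k] b) = dp i := by
      refine unique_Ici (hDp _) ?_
      rw [hm]; exact deriv_translate_Ici h1 m (hdp i)
    have e2 : Dm (F^[k] b) = dm i := by
      refine unique_Iic (hDm _) ?_
      rw [hm]; exact deriv_translate_Iic h1 m (hdm i)
    rw [e1, e2]
  -- jump is 1 off the union of the T i
  have hgout : ∀ k, k < q → (∀ i, k ∉ T i) → Dp (F^[k] b) = Dm (F^[k] b) := by
    intro k hklt hnot
    have hnb : ∀ b' ∈ B, ∀ m : ℤ, F^[k] b ≠ b' + m := by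
      intro b' hb' m hm
      have hsame : SameOrbit F b' (j i0) := ⟨k, m, Or.inr hm⟩
      obtain ⟨i, rfl⟩ := hexact b' hb' ⟨i0, hsame⟩
      exact (hnot i) (Finset.mem_filter.mpr ⟨Finset.mem_range.mpr hklt, m, hm⟩)
    obtain ⟨ε, hε, a, c, hac⟩ := haff (F^[k] b) hnb
    rw [unique_Ici (hDp _) (affine_hasderiv hε hac _),
      unique_Iic (hDm _) (affine_hasderiv hε hac _)]
  have hdisj : Set.PairwiseDisjoint (↑(Finset.univ : Finset (Fin r))) T := by
    intro i _ i' _ hne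
    refine Finset.disjoint_left.mpr ?_
    intro k hk hk'
    obtain ⟨-, m, hm⟩ := Finset.mem_filter.mp hk
    obtain ⟨-, m', hm'⟩ := Finset.mem_filter.mp hk'
    obtain ⟨h0i, h1i⟩ := hB01 (hjB i)
    obtain ⟨h0i', h1i'⟩ := hB01 (hjB i')
    have hdiff : j i - j i' = ((m' - m : ℤ) : ℝ) := by push_cast; linarith
    have habs : |((m' - m : ℤ) : ℝ)| < 1 := by
      rw [← hdiff, abs_lt]; constructor <;> linarith
    have hz : (m' - m : ℤ) = 0 := by
      have h5 : |(m' - m : ℤ)| < 1 := by exact_mod_cast habs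
      have h6 := abs_lt.mp h5
      omega
    have hjj : j i = j i' := by
      rw [hz] at hdiff; push_cast at hdiff; linarith
    exact hne (hinj hjj)
  have hUsub : Finset.univ.biUnion T ⊆ Finset.range q := by
    intro k hk
    obtain ⟨i, -, hki⟩ := Finset.mem_biUnion.mp hk
    exact (Finset.mem_filter.mp hki).1
  have e1 : ∏ k ∈ Finset.range q, (Dp (F^[k] b) / Dm (F^[k] b)) = 1 := by
    rw [Finset.prod_div_distrib, prodP, prodM]; norm_num
  have e2 : ∏ k ∈ Finset.univ.biUnion T, (Dp (F^[k] b) / Dm (F^[k] b)) = 1 := by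
    refine (Finset.prod_subset hUsub ?_).trans e1
    intro k hk hkU
    have hklt := Finset.mem_range.mp hk
    have hno : ∀ i, k ∉ T i := fun i hi =>
      hkU (Finset.mem_biUnion.mpr ⟨i, Finset.mem_univ i, hi⟩)
    rw [hgout k hklt hno]
    exact div_self (ne_of_gt (posM k))
  have e3 : ∏ k ∈ Finset.univ.biUnion T, (Dp (F^[k] b) / Dm (F^[k] b))
      = ∏ i, (dp i / dm i) ^ (cnt b) := by
    rw [Finset.prod_biUnion hdisj]
    refine Finset.prod_congr rfl ?_
    intro i _
    rw [Finset.prod_congr rfl (hgT i), Finset.prod_const, hTcard i]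
  have e4 : (∏ i, dp i / dm i) ^ (cnt b) = 1 := by
    rw [← Finset.prod_pow, ← e3, e2]
  have hpos : 0 < ∏ i, dp i / dm i := by
    refine Finset.prod_pos ?_
    intro i _
    obtain ⟨k, hk, m, hm⟩ := hfind i
    have hkT : k ∈ T i := Finset.mem_filter.mpr ⟨Finset.mem_range.mpr hk, m, hm⟩
    rw [← hgT i k hkT]
    exact div_pos (posP k) (posM k)
  rcases lt_trichotomy (∏ i, dp i / dm i) 1 with hlt | heq | hgt
  · exact absurd e4 (ne_of_lt (pow_lt_one₀ hpos.le hlt (by omega)))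
  · exact heq
  · exact absurd e4 (ne_of_gt (one_lt_pow₀ hgt (by omega)))
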